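/- Let d ≥ 2 be an integer, p ∈ (0,1) and μ_2 ∈ ℝ. Let r be a pmf on {0,…,d} supported on exactly two points, with Σ_j j·r(j) = pd, and let μ_2^r = (Σ_j j²·r(j) − pd)/(d(d−1)) be its induced second-order cross moment. Then r is an extreme point of D(p, μ_2) = {pmfs q on {0,…,d} : Σ_j j·q(j) = pd, Σ_j j²·q(j) = pd + d(d−1)μ_2} if and only if r is an extreme point of D(dp) = {pmfs q on {0,…,d} : Σ_j j·q(j) = pd} and μ_2^r = μ_2. -/

import Mathlib

open Finset

/-- A pmf `r` on `{0,…,d}` supported on exactly two points with mean `pd`, with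
induced cross moment `μ₂^r = (∑ j² r(j) − pd)/(d(d−1))`, is an extreme point of `D(p,μ₂)` iff
it is an extreme point of `D(dp)` and `μ₂^r = μ₂`. -/
theorem stmt_12 (d : ℕ) (hd : 2 ≤ d) (p : ℝ) (hp : p ∈ Set.Ioo (0 : ℝ) 1) (μ2 : ℝ)
    (r : Fin (d + 1) → ℝ) (hr0 : ∀ l, 0 ≤ r l) (hr1 : ∑ l, r l = 1)
    (hsupp : (Finset.univ.filter (fun l => r l ≠ 0)).card = 2)
    (hrmean : ∑ l, (l.val : ℝ) * r l = p * d)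
    (μ2r : ℝ)
    (hμ2r : μ2r = ((∑ l, (l.val : ℝ) ^ 2 * r l) - p * d) / ((d : ℝ) * ((d : ℝ) - 1)))
    (Dpρ : Set (Fin (d + 1) → ℝ))
    (hDpρ : Dpρ = {q : Fin (d + 1) → ℝ |
      (∀ l, 0 ≤ q l) ∧ (∑ l, q l = 1) ∧
      (∑ l, (l.val : ℝ) * q l = p * d) ∧
      (∑ l, (l.val : ℝ) ^ 2 * q l = p * d + (d : ℝ) * ((d : ℝ) - 1) * μ2)})
    (Dp : Set (Fin (d + 1) → ℝ))
    (hDp : Dp = {q : Fin (d + 1) → ℝ |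
      (∀ l, 0 ≤ q l) ∧ (∑ l, q l = 1) ∧ (∑ l, (l.val : ℝ) * q l = p * d)}) :
    r ∈ Set.extremePoints ℝ Dpρ ↔ (r ∈ Set.extremePoints ℝ Dp ∧ μ2r = μ2) := by
  have hd2 : (2 : ℝ) ≤ (d : ℝ) := by exact_mod_cast hd
  have hd1 : (d : ℝ) * ((d : ℝ) - 1) ≠ 0 := by
    apply mul_ne_zero <;> nlinarith
  obtain ⟨i, j, hij, hS⟩ := Finset.card_eq_two.mp hsupp
  have hijv : (i.val : ℝ) ≠ (j.val : ℝ) := by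
    intro h
    exact hij (Fin.ext (Nat.cast_injective h))
  have hoff : ∀ l, l ≠ i → l ≠ j → r l = 0 := by
    intro l h1 h2
    by_contra h
    have hmem : l ∈ Finset.univ.filter (fun l => r l ≠ 0) := by simp [h]
    rw [hS] at hmem
    simp [h1, h2] at hmem
  have hsum : ∀ (f q : Fin (d + 1) → ℝ), (∀ l, l ≠ i → l ≠ j → q l = 0) →
      ∑ l, f l * q l = f i * q i + f j * q j := by
    intro f q hq
    rw [← Finset.sum_subset (Finset.subset_univ ({i, j} : Finset (Fin (d + 1))))]
    · rw [Finset.sum_pair hij]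
    · intro x _ hx
      simp only [Finset.mem_insert, Finset.mem_singleton, not_or] at hx
      rw [hq x hx.1 hx.2, mul_zero]
  -- equations for r
  have er1 : r i + r j = 1 := by
    have h := hsum (fun _ => (1 : ℝ)) r hoff
    simp only [one_mul] at h
    rw [← h]; exact hr1
  have er2 : (i.val : ℝ) * r i + (j.val : ℝ) * r j = p * d := by
    have h := hsum (fun l => (l.val : ℝ)) r hoff
    rw [← h]; exact hrmean
  -- r is extreme in Dp
  have hrDp : r ∈ Dp := by rw [hDp]; exact ⟨hr0, hr1, hrmean⟩
  have hext : r ∈ Set.extremePoints ℝ Dp := by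
    rw [mem_extremePoints]
    refine ⟨hrDp, ?_⟩
    intro x₁ hx₁ x₂ hx₂ hseg
    rw [hDp] at hx₁ hx₂
    obtain ⟨a, b, ha, hb, hab, habr⟩ := hseg
    have hpt : ∀ l, a * x₁ l + b * x₂ l = r l := by
      intro l
      have := congrFun habr l
      simpa using this
    have hz : ∀ l, l ≠ i → l ≠ j → x₁ l = 0 ∧ x₂ l = 0 := by
      intro l h1 h2
      have h0 := hoff l h1 h2
      have hp1 := hpt l
      have h1' := hx₁.1 l
      have h2' := hx₂.1 l
      constructor <;> nlinarith
    have key : ∀ x : Fin (d + 1) → ℝ, (∑ l, x l = 1) →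
        (∑ l, (l.val : ℝ) * x l = p * d) → (∀ l, l ≠ i → l ≠ j → x l = 0) → x = r := by
      intro x hx1 hxm hxoff
      have e1 : x i + x j = 1 := by
        have h := hsum (fun _ => (1 : ℝ)) x hxoff
        simp only [one_mul] at h
        rw [← h]; exact hx1
      have e2 : (i.val : ℝ) * x i + (j.val : ℝ) * x j = p * d := by
        have h := hsum (fun l => (l.val : ℝ)) x hxoff
        rw [← h]; exact hxm
      have h0 : ((i.val : ℝ) - (j.val : ℝ)) * (x i - r i) = 0 := by
        linear_combination e2 - er2 - (j.val : ℝ) * e1 + (j.val : ℝ) * er1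
      have hi : x i = r i := by
        rcases mul_eq_zero.mp h0 with h | h
        · exact absurd (by linarith : (i.val : ℝ) = (j.val : ℝ)) hijv
        · linarith
      have hjv : x j = r j := by linarith
      funext l
      by_cases hli : l = i
      · rw [hli]; exact hi
      · by_cases hlj : l = j
        · rw [hlj]; exact hjv
        · rw [hxoff l hli hlj, hoff l hli hlj]
    exact ⟨key x₁ hx₁.2.1 hx₁.2.2 (fun l h1 h2 => (hz l h1 h2).1),
           key x₂ hx₂.2.1 hx₂.2.2 (fun l h1 h2 => (hz l h1 h2).2)⟩
  constructor
  · intro hρ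
    have hrmem : r ∈ Dpρ := hρ.1
    rw [hDpρ] at hrmem
    have h2 := hrmem.2.2.2
    refine ⟨hext, ?_⟩
    rw [hμ2r, h2]
    have hdm1 : (d : ℝ) - 1 ≠ 0 := (sub_pos.mpr (by linarith : (1:ℝ) < d)).ne'
    field_simp
    ring
  · rintro ⟨-, hμ⟩
    have h2mom : ∑ l, (l.val : ℝ) ^ 2 * r l = p * d + (d : ℝ) * ((d : ℝ) - 1) * μ2 := by
      have hh : μ2r * ((d : ℝ) * ((d : ℝ) - 1)) = (∑ l, (l.val : ℝ) ^ 2 * r l) - p * d := by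
        rw [hμ2r]
        have hdm1 : (d : ℝ) - 1 ≠ 0 := (sub_pos.mpr (by linarith : (1:ℝ) < d)).ne'
        field_simp
      rw [← hμ]
      linarith
    rw [mem_extremePoints]
    refine ⟨by rw [hDpρ]; exact ⟨hr0, hr1, hrmean, h2mom⟩, ?_⟩
    intro x₁ hx₁ x₂ hx₂ hseg
    have hsub : Dpρ ⊆ Dp := by
      rw [hDpρ, hDp]
      rintro q ⟨hq0, hq1, hq2, -⟩
      exact ⟨hq0, hq1, hq2⟩
    exact (mem_extremePoints.mp hext).2 x₁ (hsub hx₁) x₂ (hsub hx₂) hseg
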